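/- Let a = (a_i)_{i≥1} and b = (b_i)_{i≥1} belong to C = ∏_{i≥1} [2^{−2i}, 2^{−2i+1}] (with a_0 = b_0 = 1), and let K, L ∈ (0,∞). If the metric spaces (Υ, K·R[a]) and (Υ, L·R[b]) are isometric, then a = b (and moreover K = L). -/

import Mathlib

/-- The set `Υ = {(0,0)} ∪ ((0,1] × ℤ_{≥0})`, an element `(s, i)` being the
point at parameter `s` on the `i`-th edge. -/
def Upsilon : Type := {p : ℝ × ℕ // p = (0, 0) ∨ (0 < p.1 ∧ p.1 ≤ 1)}

/-- The distance function `R[a]` on `Υ`: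
`R[a]((s,i), (t,j)) = a i * |s - t|` if `i = j`, and
`R[a]((s,i), (t,j)) = a i * s + a j * t` otherwise. -/
noncomputable def Rmet (a : ℕ → ℝ) (p q : Upsilon) : ℝ :=
  if p.1.2 = q.1.2 then a p.1.2 * |p.1.1 - q.1.1|
  else a p.1.2 * p.1.1 + a q.1.2 * q.1.1

/-- Membership in `C = ∏_{i ≥ 1} [2^{-2i}, 2^{-2i+1}]`, together with the
convention `a 0 = 1`. -/
def MemC (a : ℕ → ℝ) : Prop :=
  a 0 = 1 ∧ ∀ i : ℕ, 1 ≤ i →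
    a i ∈ Set.Icc ((2 : ℝ) ^ (-(2 * (i : ℤ)))) ((2 : ℝ) ^ (-(2 * (i : ℤ)) + 1))

def UpsO : Upsilon := ⟨(0,0), Or.inl rfl⟩

lemma ups_nonneg (p : Upsilon) : 0 ≤ p.1.1 := by
  rcases p.2 with h | h
  · rw [h]
  · exact le_of_lt h.1

lemma ups_le_one (p : Upsilon) : p.1.1 ≤ 1 := by
  rcases p.2 with h | h
  · rw [h]; norm_num
  · exact h.2

lemma ups_eq_o (p : Upsilon) (h : p.1.1 = 0) : p = UpsO := by
  rcases p.2 with h2 | h2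
  · exact Subtype.ext h2
  · exact absurd h (ne_of_gt h2.1)

lemma ups_ext (p q : Upsilon) (h1 : p.1.1 = q.1.1) (h2 : p.1.2 = q.1.2) : p = q :=
  Subtype.ext (Prod.ext h1 h2)

lemma Rmet_o (w : ℕ → ℝ) (p : Upsilon) : Rmet w UpsO p = w p.1.2 * p.1.1 := by
  unfold Rmet
  by_cases h : UpsO.1.2 = p.1.2
  · rw [if_pos h]
    have : UpsO.1.1 = 0 := rfl
    rw [this, h, zero_sub, abs_neg, abs_of_nonneg (ups_nonneg p)]
  · rw [if_neg h]
    have : UpsO.1.1 = 0 := rfl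
    rw [this]; ring

lemma memC_pos {a : ℕ → ℝ} (ha : MemC a) (i : ℕ) : 0 < a i := by
  rcases Nat.eq_zero_or_pos i with h | h
  · rw [h, ha.1]; norm_num
  · have := (ha.2 i h).1
    calc (0:ℝ) < 2 ^ (-(2 * (i:ℤ))) := by positivity
    _ ≤ a i := this

lemma memC_anti {a : ℕ → ℝ} (ha : MemC a) : StrictAnti a := by
  apply strictAnti_nat_of_succ_lt
  intro n
  rcases Nat.eq_zero_or_pos n with h | h
  · subst h
    have h1 := (ha.2 1 le_rfl).2
    rw [ha.1]
    calc a 1 ≤ (2:ℝ) ^ (-(2 * (1:ℤ)) + 1) := h1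
    _ < 1 := by norm_num
  · have h1 := (ha.2 (n+1) (by omega)).2
    have h2 := (ha.2 n h).1
    calc a (n+1) ≤ (2:ℝ) ^ (-(2 * ((n:ℤ)+1)) + 1) := by push_cast at h1 ⊢; exact h1
    _ < 2 ^ (-(2 * (n:ℤ))) := by
        apply zpow_lt_zpow_right₀ one_lt_two
        omega
    _ ≤ a n := h2

def ThreeNear (d : Upsilon → Upsilon → ℝ) (x : Upsilon) : Prop :=
  ∀ δ : ℝ, 0 < δ → ∃ p q r : Upsilon, p ≠ q ∧ p ≠ r ∧ q ≠ r ∧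
    d x p = d x q ∧ d x q = d x r ∧ 0 < d x p ∧ d x p < δ

lemma threeNear_o {w : ℕ → ℝ} (hw : MemC w) {c : ℝ} (hc : 0 < c) :
    ThreeNear (fun p q => c * Rmet w p q) UpsO := by
  intro δ hδ
  set ε : ℝ := min δ (c * w 2) / 2 with hε
  have hw2 : 0 < w 2 := memC_pos hw 2
  have hεpos : 0 < ε := by positivity
  have hεδ : ε < δ := by
    have : min δ (c * w 2) ≤ δ := min_le_left _ _
    nlinarith
  have hεw2 : ε ≤ c * w 2 / 2 := by
    have : min δ (c * w 2) ≤ c * w 2 := min_le_right _ _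
    nlinarith
  have anti := memC_anti hw
  have key : ∀ j : ℕ, j ≤ 2 → ε ≤ c * w j := by
    intro j hj
    have : w 2 ≤ w j := (anti.antitone hj)
    nlinarith [memC_pos hw j]
  -- points on edges 0,1,2 at parameter ε/(c * w j)
  have mk : ∀ j : ℕ, j ≤ 2 → ∃ p : Upsilon, p.1.2 = j ∧ c * Rmet w UpsO p = ε := by
    intro j hj
    have hwj : 0 < w j := memC_pos hw j
    have ht1 : 0 < ε / (c * w j) := by positivity
    have ht2 : ε / (c * w j) ≤ 1 := by
      rw [div_le_one (by positivity)]; exact key j hj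
    refine ⟨⟨(ε / (c * w j), j), Or.inr ⟨ht1, ht2⟩⟩, rfl, ?_⟩
    erw [Rmet_o]
    field_simp
  obtain ⟨p, hp2, hpd⟩ := mk 0 (by norm_num)
  obtain ⟨q, hq2, hqd⟩ := mk 1 (by norm_num)
  obtain ⟨r, hr2, hrd⟩ := mk 2 (by norm_num)
  refine ⟨p, q, r, ?_, ?_, ?_, ?_, ?_, ?_, ?_⟩
  · intro h; rw [h, hq2] at hp2; omega
  · intro h; rw [h, hr2] at hp2; omega
  · intro h; rw [h, hr2] at hq2; omega
  · simp only [hpd, hqd]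
  · simp only [hqd, hrd]
  · simp only [hpd]; exact hεpos
  · simp only [hpd]; exact hεδ

lemma not_threeNear {w : ℕ → ℝ} (hw : MemC w) {c : ℝ} (hc : 0 < c)
    (x : Upsilon) (hx : x ≠ UpsO) :
    ¬ ThreeNear (fun p q => c * Rmet w p q) x := by
  intro H
  have hs : 0 < x.1.1 := by
    rcases x.2 with h | h
    · exact absurd (Subtype.ext h) hx
    · exact h.1
  have hwx : 0 < w x.1.2 := memC_pos hw _
  obtain ⟨p, q, r, hpq, hpr, hqr, e1, e2, hpos, hlt⟩ :=
    H (c * w x.1.2 * x.1.1) (by positivity)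
  simp only at e1 e2 hpos hlt
  set D := Rmet w x p with hD
  have hDpos : 0 < D := by
    by_contra h
    push_neg at h
    nlinarith
  have hltD : D < w x.1.2 * x.1.1 := by
    have : c * D < c * (w x.1.2 * x.1.1) := by nlinarith
    exact lt_of_mul_lt_mul_left this (le_of_lt hc)
  have same : ∀ z : Upsilon, c * Rmet w x z = c * D →
      z.1.2 = x.1.2 ∧ (z.1.1 = x.1.1 - D / w x.1.2 ∨
        z.1.1 = x.1.1 + D / w x.1.2) := by
    intro z hz
    have hd : Rmet w x z = D := mul_left_cancel₀ (ne_of_gt hc) hz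
    by_cases hj : x.1.2 = z.1.2
    · refine ⟨hj.symm, ?_⟩
      unfold Rmet at hd
      rw [if_pos hj] at hd
      have habs : |x.1.1 - z.1.1| = D / w x.1.2 := by
        rw [eq_div_iff (ne_of_gt hwx)]
        linarith [hd]
      have hDw : 0 ≤ D / w x.1.2 := le_of_lt (by positivity)
      rcases (abs_eq hDw).mp habs with h | h
      · left; linarith
      · right; linarith
    · exfalso
      unfold Rmet at hd
      rw [if_neg hj] at hd
      have h0 : 0 ≤ w z.1.2 * z.1.1 := mul_nonneg (le_of_lt (memC_pos hw _)) (ups_nonneg z)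
      linarith
  obtain ⟨hp2, hp1⟩ := same p rfl
  obtain ⟨hq2, hq1⟩ := same q e1.symm
  obtain ⟨hr2, hr1⟩ := same r (e1.trans e2).symm
  rcases hp1 with h1 | h1 <;> rcases hq1 with h2 | h2 <;> rcases hr1 with h3 | h3 <;>
    first
      | exact hpq (ups_ext p q (h1.trans h2.symm) (hp2.trans hq2.symm))
      | exact hpr (ups_ext p r (h1.trans h3.symm) (hp2.trans hr2.symm))
      | exact hqr (ups_ext q r (h2.trans h3.symm) (hq2.trans hr2.symm))

def ExtPt (d : Upsilon → Upsilon → ℝ) (x : Upsilon) : Prop :=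
  ¬ ∃ q : Upsilon, d UpsO x < d UpsO q ∧ d x q = d UpsO q - d UpsO x

def tipU (i : ℕ) : Upsilon := ⟨(1, i), Or.inr ⟨one_pos, le_rfl⟩⟩

lemma tipU_fst (i : ℕ) : (tipU i).1.1 = 1 := rfl
lemma tipU_snd (i : ℕ) : (tipU i).1.2 = i := rfl

lemma extPt_iff {w : ℕ → ℝ} (hw : MemC w) {c : ℝ} (hc : 0 < c) (x : Upsilon) :
    ExtPt (fun p q => c * Rmet w p q) x ↔ x.1.1 = 1 := by
  have hwpos : ∀ i, 0 < w i := memC_pos hw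
  constructor
  · intro hE
    by_contra hx1
    have hs : x.1.1 < 1 := lt_of_le_of_ne (ups_le_one x) hx1
    apply hE
    refine ⟨tipU x.1.2, ?_, ?_⟩
    · simp only [Rmet_o, tipU_fst, tipU_snd]
      exact mul_lt_mul_of_pos_left (mul_lt_mul_of_pos_left hs (hwpos _)) hc
    · simp only [Rmet_o, tipU_fst, tipU_snd]
      have hR : Rmet w x (tipU x.1.2) = w x.1.2 * (1 - x.1.1) := by
        unfold Rmet
        rw [if_pos (tipU_snd x.1.2).symm]
        rw [tipU_fst, abs_of_nonpos (by linarith : x.1.1 - 1 ≤ 0)]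
        ring
      rw [hR]; ring
  · intro hx1 ⟨q, hlt, heq⟩
    simp only [Rmet_o] at hlt heq
    rw [hx1] at hlt heq
    by_cases hj : x.1.2 = q.1.2
    · have hR : Rmet w x q = w x.1.2 * (1 - q.1.1) := by
        unfold Rmet
        rw [if_pos hj, hx1, abs_of_nonneg (by linarith [ups_le_one q] : (0:ℝ) ≤ 1 - q.1.1)]
      rw [hR, ← hj] at heq
      have hwx := hwpos x.1.2
      have hq1 : q.1.1 = 1 := le_antisymm (ups_le_one q) (by nlinarith [mul_pos hc hwx])
      rw [← hj, hq1] at hlt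
      exact lt_irrefl _ hlt
    · have hR : Rmet w x q = w x.1.2 * 1 + w q.1.2 * q.1.1 := by
        unfold Rmet
        rw [if_neg hj, hx1]
      rw [hR] at heq
      have hwx := hwpos x.1.2
      nlinarith [mul_pos hc hwx]


/-- Let `a, b ∈ C` (with `a 0 = b 0 = 1`) and
`K, L ∈ (0, ∞)`.  If `(Υ, K·R[a])` and `(Υ, L·R[b])` are isometric — i.e.
there is a bijection `f : Υ → Υ` with `L * R[b] (f p) (f q) = K * R[a] p q`
for all `p, q` — then `a = b` and `K = L`. -/
theorem statement12 (a b : ℕ → ℝ) (ha : MemC a) (hb : MemC b)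
    (K L : ℝ) (hK : 0 < K) (hL : 0 < L)
    (f : Upsilon → Upsilon) (hf : Function.Bijective f)
    (hiso : ∀ p q : Upsilon, L * Rmet b (f p) (f q) = K * Rmet a p q) :
    a = b ∧ K = L := by
  -- Step 1: f fixes the origin
  have hfo : f UpsO = UpsO := by
    by_contra h
    apply not_threeNear hb hL (f UpsO) h
    intro δ hδ
    obtain ⟨p, q, r, hpq, hpr, hqr, e1, e2, hpos, hlt⟩ := threeNear_o ha hK δ hδ
    simp only at e1 e2 hpos hlt ⊢
    exact ⟨f p, f q, f r, fun h => hpq (hf.1 h), fun h => hpr (hf.1 h),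
      fun h => hqr (hf.1 h), by rw [hiso, hiso]; exact e1, by rw [hiso, hiso]; exact e2,
      by rw [hiso]; exact hpos, by rw [hiso]; exact hlt⟩
  have hdist : ∀ z : Upsilon, L * Rmet b UpsO (f z) = K * Rmet a UpsO z := by
    intro z
    conv_lhs => rw [← hfo]
    exact hiso UpsO z
  -- Step 2: ExtPt transfers
  have extT : ∀ p : Upsilon, ExtPt (fun p q => L * Rmet b p q) (f p) ↔
      ExtPt (fun p q => K * Rmet a p q) p := by
    intro p
    unfold ExtPt
    apply not_congr
    constructor
    · rintro ⟨q, h1, h2⟩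
      obtain ⟨q', rfl⟩ := hf.2 q
      refine ⟨q', ?_, ?_⟩
      · simpa only [hdist] using h1
      · simp only [hdist, hiso] at h2
        exact h2
    · rintro ⟨q, h1, h2⟩
      refine ⟨f q, ?_, ?_⟩
      · simpa only [hdist] using h1
      · simp only [hdist, hiso]
        exact h2
  -- Step 3: f permutes tips
  have htip : ∀ i : ℕ, (f (tipU i)).1.1 = 1 := by
    intro i
    have h1 : ExtPt (fun p q => K * Rmet a p q) (tipU i) :=
      (extPt_iff ha hK _).mpr (tipU_fst i)
    have h2 := (extT (tipU i)).mpr h1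
    exact (extPt_iff hb hL _).mp h2
  set σ : ℕ → ℕ := fun i => (f (tipU i)).1.2 with hσ
  have hftip : ∀ i : ℕ, f (tipU i) = tipU (σ i) := by
    intro i
    exact ups_ext _ _ (htip i) rfl
  have hval : ∀ i : ℕ, L * b (σ i) = K * a i := by
    intro i
    have := hdist (tipU i)
    rw [hftip i] at this
    simp only [Rmet_o, tipU_fst, tipU_snd, mul_one] at this
    exact this
  have hinj : Function.Injective σ := by
    intro i j hij
    have : f (tipU i) = f (tipU j) := by
      rw [hftip i, hftip j, hij]
    have := hf.1 this
    have := congrArg (fun p : Upsilon => p.1.2) this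
    simpa [tipU_snd] using this
  have hsurj : Function.Surjective σ := by
    intro j
    obtain ⟨p, hp⟩ := hf.2 (tipU j)
    have h1 : ExtPt (fun p q => L * Rmet b p q) (f p) := by
      rw [hp]
      exact (extPt_iff hb hL _).mpr (tipU_fst j)
    have h2 : p.1.1 = 1 := (extPt_iff ha hK _).mp ((extT p).mp h1)
    have hpe : p = tipU p.1.2 := ups_ext _ _ h2 rfl
    refine ⟨p.1.2, ?_⟩
    have : f (tipU p.1.2) = tipU j := by rw [← hpe, hp]
    calc σ p.1.2 = (f (tipU p.1.2)).1.2 := rfl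
    _ = (tipU j).1.2 := by rw [this]
    _ = j := rfl
  have hmono : StrictMono σ := by
    intro i j hij
    have h1 : a j < a i := memC_anti ha hij
    have h2 : b (σ j) < b (σ i) := by
      have hv1 := hval i
      have hv2 := hval j
      nlinarith
    exact (memC_anti hb).lt_iff_gt.mp h2
  have hid : ∀ i, σ i = i := by
    intro i
    have hle1 : i ≤ σ i := hmono.le_apply
    set e := Equiv.ofBijective σ ⟨hinj, hsurj⟩ with he
    have hsymm : ∀ n, σ (e.symm n) = n := fun n => e.apply_symm_apply n
    have hsm : StrictMono (fun n => e.symm n) := by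
      intro x y hxy
      by_contra hcon
      push_neg at hcon
      have := hmono.monotone hcon
      rw [hsymm, hsymm] at this
      omega
    have hle2 : σ i ≤ i := by
      have h3 : i ≤ e.symm i := hsm.le_apply
      have := hmono.monotone h3
      rw [hsymm] at this
      exact this
    omega
  -- conclude
  have hKL : K = L := by
    have := hval 0
    rw [hid 0, ha.1, hb.1] at this
    linarith
  refine ⟨?_, hKL⟩
  funext i
  have := hval i
  rw [hid i, ← hKL] at this
  have := mul_left_cancel₀ (ne_of_gt hK) this
  exact this.symm
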